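/- Let Δ ∈ (0,1), η > 2, and f = ⌈64η/Δ²⌉. Let (X_i)_{i≥1} be i.i.d. random variables in [0,1] with mean μ, and let μ̂_n = (1/n)Σ_{i=1}^n X_i. Then the probability that there exists n ≥ f with μ̂_n > μ + Δ/8 is at most C·exp(−c·η) for absolute constants C, c > 0. -/

import Mathlib

open MeasureTheory ProbabilityTheory Real

variable {Ω : Type} [MeasurableSpace Ω] {P : Measure Ω}

lemma exp_quad {t : ℝ} (h : |t| ≤ 1) : Real.exp t ≤ 1 + t + (3/4) * t^2 := by
  have h2 := Real.exp_bound h (n := 2) (by norm_num)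
  have e : ∑ i ∈ Finset.range 2, t ^ i / (Nat.factorial i) = 1 + t := by
    simp [Finset.sum_range_succ]
  rw [e] at h2
  have h3 : |Real.exp t - (1 + t)| ≤ (3/4) * t^2 := by
    refine h2.trans (le_of_eq ?_)
    rw [sq_abs]
    norm_num [Nat.factorial]
    ring
  have := (abs_le.1 h3).2
  linarith

lemma int_bdd [IsFiniteMeasure P] {f : Ω → ℝ} (hm : AEStronglyMeasurable f P) {C : ℝ}
    (h : ∀ᵐ ω ∂P, |f ω| ≤ C) : Integrable f P :=
  (integrable_const C).mono' hm (by simpa [Real.norm_eq_abs] using h)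

lemma mgf_one [IsProbabilityMeasure P] {X : Ω → ℝ} (hm : Measurable X)
    (hb : ∀ᵐ ω ∂P, X ω ∈ Set.Icc (0:ℝ) 1) {μ l : ℝ} (hμ : ∫ ω, X ω ∂P = μ)
    (hl0 : 0 ≤ l) (hl1 : l ≤ 1) :
    ∫ ω, exp (l * X ω) ∂P ≤ exp (l*μ + (3/16)*l^2) := by
  have hXint : Integrable X P := int_bdd hm.aestronglyMeasurable
    (hb.mono fun ω h => abs_le.2 ⟨by linarith [h.1], h.2⟩)
  have hμ0 : 0 ≤ μ := hμ ▸ integral_nonneg_of_ae (hb.mono fun ω h => h.1)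
  have hμ1 : μ ≤ 1 := by
    rw [← hμ]
    calc ∫ ω, X ω ∂P ≤ ∫ _, (1:ℝ) ∂P :=
      integral_mono_ae hXint (integrable_const 1) (hb.mono fun ω h => h.2)
    _ = 1 := by simp
  have hX2int : Integrable (fun ω => (X ω - μ)^2) P :=
    int_bdd (C := 1) ((hm.sub measurable_const).pow_const 2).aestronglyMeasurable
      (hb.mono fun ω h => by
        rw [abs_of_nonneg (sq_nonneg _)]
        nlinarith [h.1, h.2])
  have hexpint : Integrable (fun ω => exp (l * X ω)) P :=
    int_bdd (C := Real.exp 1) (((hm.const_mul l).exp).aestronglyMeasurable)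
      (hb.mono fun ω h => by
        rw [abs_of_nonneg (Real.exp_nonneg _)]
        exact Real.exp_le_exp.2 (by nlinarith [h.1, h.2]))
  have key : ∫ ω, exp (l * X ω) ∂P ≤
      ∫ ω, exp (l*μ) * (1 + l*(X ω - μ) + (3/4)*(l*(X ω - μ))^2) ∂P := by
    refine integral_mono_ae hexpint ?_ ?_
    · apply Integrable.const_mul
      have : Integrable (fun ω => l*(X ω - μ)) P := ((hXint.sub (integrable_const μ)).const_mul l)
      refine (Integrable.add (Integrable.add (integrable_const 1) this) ?_)
      have : Integrable (fun ω => (l*(X ω - μ))^2) P := by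
        have := hX2int.const_mul (l^2)
        simpa [mul_pow, mul_comm] using this
      exact this.const_mul _
    · filter_upwards [hb] with ω h
      have habs : |l * (X ω - μ)| ≤ 1 := by
        rw [abs_mul, abs_of_nonneg hl0]
        have h1 : |X ω - μ| ≤ 1 := abs_le.2 ⟨by linarith [h.1], by linarith [h.2]⟩
        nlinarith [abs_nonneg (X ω - μ)]
      calc exp (l * X ω) = exp (l*μ) * exp (l * (X ω - μ)) := by
            rw [← Real.exp_add]; ring_nf
      _ ≤ exp (l*μ) * (1 + l*(X ω - μ) + (3/4)*(l*(X ω - μ))^2) := by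
            apply mul_le_mul_of_nonneg_left (exp_quad habs) (Real.exp_nonneg _)
  have hsub : Integrable (fun ω => X ω - μ) P := hXint.sub (integrable_const μ)
  have e1 : ∫ ω, (X ω - μ) ∂P = 0 := by
    rw [integral_sub hXint (integrable_const μ)]; simp [hμ]
  have hV : ∫ ω, (X ω - μ)^2 ∂P ≤ 1/4 := by
    have hg : Integrable (fun ω => X ω - 2*μ*(X ω) + μ^2) P :=
      (hXint.sub ((hXint.const_mul (2*μ)))).add (integrable_const _)
    have step : ∫ ω, (X ω - μ)^2 ∂P ≤ ∫ ω, (X ω - 2*μ*(X ω) + μ^2) ∂P := by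
      refine integral_mono_ae hX2int hg (hb.mono fun ω h => ?_)
      show (X ω - μ)^2 ≤ X ω - 2*μ*(X ω) + μ^2
      nlinarith [h.1, h.2]
    have comp : ∫ ω, (X ω - 2*μ*(X ω) + μ^2) ∂P = μ - 2*μ*μ + μ^2 := by
      have hfe : (fun ω => X ω - 2*μ*(X ω) + μ^2) = fun ω => (1-2*μ)*(X ω) + μ^2 := by
        funext ω; ring
      rw [hfe, integral_add (hXint.const_mul _) (integrable_const _), integral_const_mul, hμ]
      simp
      ring
    rw [comp] at step
    nlinarith [step, sq_nonneg (μ - 1/2)]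
  have h2 : Integrable (fun ω => (3/4)*(l*(X ω-μ))^2) P := by
    have : Integrable (fun ω => (l*(X ω - μ))^2) P := by
      have := hX2int.const_mul (l^2)
      simpa [mul_pow, mul_comm] using this
    exact this.const_mul _
  have hI : ∫ ω, (1 + l*(X ω-μ) + (3/4)*(l*(X ω-μ))^2) ∂P
      = 1 + (3/4)*l^2*(∫ ω, (X ω-μ)^2 ∂P) := by
    have h1 : Integrable (fun ω => (1:ℝ) + l*(X ω-μ)) P :=
      (integrable_const 1).add (hsub.const_mul l)
    rw [integral_add h1 h2, integral_add (integrable_const 1) (hsub.const_mul l),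
      integral_const_mul, e1]
    simp_rw [mul_pow]
    rw [integral_const_mul, integral_const_mul]
    simp
    ring
  calc ∫ ω, exp (l * X ω) ∂P
      ≤ ∫ ω, exp (l*μ) * (1 + l*(X ω - μ) + (3/4)*(l*(X ω - μ))^2) ∂P := key
    _ = exp (l*μ) * (1 + (3/4)*l^2*(∫ ω, (X ω-μ)^2 ∂P)) := by
        rw [integral_const_mul, hI]
    _ ≤ exp (l*μ) * (1 + (3/16)*l^2) := by
        have hl2 : (0:ℝ) ≤ l^2 := sq_nonneg l
        have : (3/4)*l^2*(∫ ω, (X ω-μ)^2 ∂P) ≤ (3/16)*l^2 := by nlinarith [hV]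
        nlinarith [Real.exp_pos (l*μ)]
    _ ≤ exp (l*μ) * exp ((3/16)*l^2) := by
        have := Real.add_one_le_exp ((3/16)*l^2)
        nlinarith [Real.exp_pos (l*μ)]
    _ = exp (l*μ + (3/16)*l^2) := (Real.exp_add _ _).symm



/-- partial sums -/
def Ssum (X : ℕ → Ω → ℝ) (n : ℕ) (ω : Ω) : ℝ := ∑ i ∈ Finset.Icc 1 n, X i ω

def Dset (X : ℕ → Ω → ℝ) (f₀ : ℕ) (a : ℝ) (n : ℕ) : Set Ω :=
  {ω | a*n < Ssum X n ω ∧ ∀ m, f₀ ≤ m → m < n → Ssum X m ω ≤ a*m}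

lemma Ssum_meas {X : ℕ → Ω → ℝ} (hmeas : ∀ i, Measurable (X i)) (n : ℕ) :
    Measurable (Ssum X n) :=
  Finset.measurable_sum _ fun i _ => hmeas i

lemma Dset_meas {X : ℕ → Ω → ℝ} (hmeas : ∀ i, Measurable (X i)) (f₀ : ℕ) (a : ℝ) (n : ℕ) :
    MeasurableSet (Dset X f₀ a n) := by
  have h1 : Dset X f₀ a n = {ω | a*n < Ssum X n ω} ∩
      ⋂ (m : ℕ), ⋂ (_ : f₀ ≤ m), ⋂ (_ : m < n), {ω | Ssum X m ω ≤ a*m} := by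
    ext ω; simp [Dset, Set.mem_iInter]
  rw [h1]
  exact (measurableSet_lt measurable_const (Ssum_meas hmeas n)).inter
    (MeasurableSet.iInter fun m => MeasurableSet.iInter fun _ => MeasurableSet.iInter fun _ =>
      measurableSet_le (Ssum_meas hmeas m) measurable_const)

lemma factor [IsProbabilityMeasure P] {X : ℕ → Ω → ℝ} (hmeas : ∀ i, Measurable (X i))
    (hindep : iIndepFun X P) (f₀ : ℕ) (a c lam : ℝ) {n M : ℕ} :
    ∫ ω, (Dset X f₀ a n).indicator 1 ω * Real.exp (lam * ((∑ i ∈ Finset.Ioc n M, X i ω) - c)) ∂P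
    = (P (Dset X f₀ a n)).toReal *
      ∫ ω, Real.exp (lam * ((∑ i ∈ Finset.Ioc n M, X i ω) - c)) ∂P := by
  classical
  set S₁ : Finset ℕ := Finset.Icc 1 n with hS₁
  set S₂ : Finset ℕ := Finset.Ioc n M with hS₂
  have hdisj : Disjoint S₁ S₂ := by
    simp only [hS₁, hS₂, Finset.disjoint_left, Finset.mem_Icc, Finset.mem_Ioc]
    omega
  set T : ℕ → (↥S₁ → ℝ) → ℝ :=
    fun m x => ∑ i ∈ Finset.univ.filter (fun i : ↥S₁ => (i:ℕ) ≤ m), x i with hT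
  have hTmeas : ∀ m, Measurable (T m) :=
    fun m => Finset.measurable_sum _ fun i _ => measurable_pi_apply i
  have hTS : ∀ m, m ≤ n → ∀ ω, T m (fun i : ↥S₁ => X i ω) = Ssum X m ω := by
    intro m hm ω
    rw [hT]
    simp only
    rw [Finset.univ_eq_attach, Finset.sum_filter,
      Finset.sum_attach S₁ (fun j => if j ≤ m then X j ω else 0), ← Finset.sum_filter]
    have : S₁.filter (· ≤ m) = Finset.Icc 1 m := by
      ext k; simp only [hS₁, Finset.mem_filter, Finset.mem_Icc]; omega
    rw [this]; rfl
  set U : Set (↥S₁ → ℝ) :=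
    {x | a*n < T n x ∧ ∀ m, f₀ ≤ m → m < n → T m x ≤ a*m} with hUdef
  have hU : MeasurableSet U := by
    have h1 : U = {x | a*n < T n x} ∩
        ⋂ (m : ℕ), ⋂ (_ : f₀ ≤ m), ⋂ (_ : m < n), {x | T m x ≤ a*m} := by
      ext x; simp [hUdef, Set.mem_iInter]
    rw [h1]
    exact (measurableSet_lt measurable_const (hTmeas n)).inter
      (MeasurableSet.iInter fun m => MeasurableSet.iInter fun _ => MeasurableSet.iInter fun _ =>
        measurableSet_le (hTmeas m) measurable_const)
  have hDU : Dset X f₀ a n = (fun ω (i : ↥S₁) => X i ω) ⁻¹' U := by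
    ext ω
    simp only [Dset, Set.mem_preimage, hUdef, Set.mem_setOf_eq]
    constructor
    · rintro ⟨h1, h2⟩
      exact ⟨by rwa [hTS n le_rfl], fun m hm hmn => by rw [hTS m hmn.le]; exact h2 m hm hmn⟩
    · rintro ⟨h1, h2⟩
      exact ⟨by rwa [hTS n le_rfl] at h1, fun m hm hmn => by
        have := h2 m hm hmn; rwa [hTS m hmn.le] at this⟩
  set φ : (↥S₁ → ℝ) → ℝ := U.indicator 1 with hφdef
  set ψ : (↥S₂ → ℝ) → ℝ :=
    fun x => Real.exp (lam * ((∑ i : ↥S₂, x i) - c)) with hψdef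
  have hφ : Measurable φ := measurable_const.indicator hU
  have hψ : Measurable ψ :=
    (((Finset.measurable_sum _ fun i _ => measurable_pi_apply i).sub
      measurable_const).const_mul lam).exp
  have hIF : IndepFun (φ ∘ (fun ω (i : ↥S₁) => X i ω)) (ψ ∘ (fun ω (i : ↥S₂) => X i ω)) P :=
    (hindep.indepFun_finset S₁ S₂ hdisj hmeas).comp hφ hψ
  have hφV : (φ ∘ (fun ω (i : ↥S₁) => X i ω)) = (Dset X f₀ a n).indicator 1 := by
    funext ω
    by_cases hω : ω ∈ Dset X f₀ a n
    · have hx : (fun i : ↥S₁ => X i ω) ∈ U := by rw [hDU] at hω; exact hω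
      simp [hφdef, Set.indicator_of_mem hx, Set.indicator_of_mem hω, Function.comp]
    · have hx : (fun i : ↥S₁ => X i ω) ∉ U := by rw [hDU] at hω; exact hω
      simp [hφdef, Set.indicator_of_notMem hx, Set.indicator_of_notMem hω, Function.comp]
  have hψV : (ψ ∘ (fun ω (i : ↥S₂) => X i ω)) =
      fun ω => Real.exp (lam * ((∑ i ∈ Finset.Ioc n M, X i ω) - c)) := by
    funext ω
    simp only [Function.comp, hψdef]
    congr 2
    rw [Finset.univ_eq_attach, Finset.sum_attach S₂ (fun j => X j ω)]
  have := hIF.integral_fun_mul_eq_mul_integral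
    (hφ.comp (measurable_pi_lambda _ fun i => hmeas i)).aestronglyMeasurable
    (hψ.comp (measurable_pi_lambda _ fun i => hmeas i)).aestronglyMeasurable
  rw [hφV, hψV] at this
  simp only at this
  rw [this, integral_indicator_one (Dset_meas hmeas f₀ a n), measureReal_def]

set_option maxHeartbeats 2000000 in
lemma block [IsProbabilityMeasure P] {X : ℕ → Ω → ℝ} (hmeas : ∀ i, Measurable (X i))
    (hindep : iIndepFun X P)
    {μ : ℝ} (hb : ∀ i, ∀ᵐ ω ∂P, X i ω ∈ Set.Icc (0:ℝ) 1)
    (hμi : ∀ i, ∫ ω, X i ω ∂P = μ)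
    {lam ε : ℝ} (hl0 : 0 ≤ lam) (hl1 : lam ≤ 1) (hε : 0 ≤ ε)
    {f₀ N : ℕ} (hfN : f₀ ≤ N) :
    ∑ n ∈ Finset.Ico N (2*N), (P (Dset X f₀ (μ+ε) n)).toReal ≤
      Real.exp (((3/8)*lam^2 - lam*ε) * N) := by
  classical
  -- basic facts about μ
  have hμ0 : 0 ≤ μ := (hμi 0) ▸ integral_nonneg_of_ae ((hb 0).mono fun ω h => h.1)
  have hμ1 : μ ≤ 1 := by
    rw [← hμi 0]
    have h1le : ∫ ω, X 0 ω ∂P ≤ ∫ _ω, (1:ℝ) ∂P := by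
      refine integral_mono_ae ?_ (integrable_const 1) ((hb 0).mono fun ω h => h.2)
      exact int_bdd (C := 1) (hmeas 0).aestronglyMeasurable
        ((hb 0).mono fun ω h => abs_le.2 ⟨by linarith [h.1], h.2⟩)
    simpa using h1le
  set M := 2*N with hM
  have hbM : ∀ᵐ ω ∂P, ∀ i ∈ Finset.Icc 0 M, X i ω ∈ Set.Icc (0:ℝ) 1 :=
    (ae_ball_iff (Finset.Icc 0 M : Finset ℕ).countable_toSet).2 fun i _ => hb i
  -- split identity
  have hsplit : ∀ n, n ≤ M → ∀ ω, Ssum X M ω = Ssum X n ω + ∑ i ∈ Finset.Ioc n M, X i ω := by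
    intro n hn ω
    have h0 : ∀ k : ℕ, Finset.Icc 1 k = Finset.Ioc 0 k := fun k => by
      ext x; simp [Finset.mem_Icc, Finset.mem_Ioc]; omega
    rw [Ssum, Ssum, h0, h0, Finset.sum_Ioc_consecutive _ (Nat.zero_le n) hn]
  -- integrability of the main exponential
  have hWmeas : Measurable (fun ω => Real.exp (lam * (Ssum X M ω - M*μ))) :=
    (((Ssum_meas hmeas M).sub measurable_const).const_mul lam).exp
  have hWbdd : ∀ᵐ ω ∂P, |Real.exp (lam * (Ssum X M ω - M*μ))| ≤ Real.exp M := by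
    filter_upwards [hbM] with ω h
    have hS0 : 0 ≤ Ssum X M ω :=
      Finset.sum_nonneg fun i hi => (h i (by simp only [Finset.mem_Icc] at hi ⊢; omega)).1
    have hS : Ssum X M ω ≤ M := by
      rw [Ssum]
      calc ∑ i ∈ Finset.Icc 1 M, X i ω ≤ ∑ _i ∈ Finset.Icc 1 M, (1:ℝ) :=
        Finset.sum_le_sum fun i hi => (h i (by simp only [Finset.mem_Icc] at hi ⊢; omega)).2
      _ ≤ M := by simp [Nat.card_Icc]
    rw [abs_of_nonneg (Real.exp_pos _).le]
    apply Real.exp_le_exp.2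
    have hMc : (0:ℝ) ≤ M := Nat.cast_nonneg M
    by_cases hc : 0 ≤ Ssum X M ω - ↑M * μ
    · nlinarith
    · nlinarith
  have hWint : Integrable (fun ω => Real.exp (lam * (Ssum X M ω - M*μ))) P :=
    int_bdd hWmeas.aestronglyMeasurable hWbdd
  -- ∫ W ≤ exp((3/16) lam² M)
  have hWle : ∫ ω, Real.exp (lam * (Ssum X M ω - M*μ)) ∂P ≤ Real.exp ((3/16)*lam^2*M) := by
    have hmgf : ∫ ω, Real.exp (lam * Ssum X M ω) ∂P
        = ∏ i ∈ Finset.Icc 1 M, mgf (X i) P lam := by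
      rw [← hindep.mgf_sum hmeas (Finset.Icc 1 M)]
      simp only [mgf, Finset.sum_apply]
      rfl
    have hfac : ∀ i ∈ Finset.Icc 1 M, mgf (X i) P lam ≤ Real.exp (lam*μ + (3/16)*lam^2) :=
      fun i _ => mgf_one (hmeas i) (hb i) (hμi i) hl0 hl1
    have hprod : ∏ i ∈ Finset.Icc 1 M, mgf (X i) P lam
        ≤ Real.exp ((lam*μ + (3/16)*lam^2) * M) := by
      calc ∏ i ∈ Finset.Icc 1 M, mgf (X i) P lam
          ≤ ∏ _i ∈ Finset.Icc 1 M, Real.exp (lam*μ + (3/16)*lam^2) :=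
            Finset.prod_le_prod (fun i _ => mgf_nonneg) hfac
        _ = Real.exp ((lam*μ + (3/16)*lam^2) * M) := by
            rw [Finset.prod_const, ← Real.exp_nat_mul, Nat.card_Icc]
            simp [mul_comm]
    have hWeq : (fun ω => Real.exp (lam * (Ssum X M ω - M*μ)))
        = fun ω => Real.exp (-(lam*(M*μ))) * Real.exp (lam * Ssum X M ω) := by
      funext ω
      rw [← Real.exp_add]
      congr 1
      ring
    rw [hWeq, integral_const_mul, hmgf]
    calc Real.exp (-(lam*(↑M*μ))) * ∏ i ∈ Finset.Icc 1 M, mgf (X i) P lam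
        ≤ Real.exp (-(lam*(↑M*μ))) * Real.exp ((lam*μ + (3/16)*lam^2) * M) :=
          mul_le_mul_of_nonneg_left hprod (Real.exp_pos _).le
      _ = Real.exp ((3/16)*lam^2*M) := by rw [← Real.exp_add]; congr 1; ring
  -- indicator times W : integrability
  have hDW_meas : ∀ n : ℕ, Measurable (fun ω =>
      (Dset X f₀ (μ+ε) n).indicator 1 ω * Real.exp (lam * (Ssum X M ω - M*μ))) := fun n =>
    (measurable_const.indicator (Dset_meas hmeas f₀ (μ+ε) n)).mul hWmeas
  have hDW_int : ∀ n : ℕ, Integrable (fun ω =>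
      (Dset X f₀ (μ+ε) n).indicator 1 ω * Real.exp (lam * (Ssum X M ω - M*μ))) P := by
    intro n
    refine int_bdd (C := Real.exp M) (hDW_meas n).aestronglyMeasurable (hWbdd.mono fun ω h => ?_)
    rw [abs_mul]
    by_cases hω : ω ∈ Dset X f₀ (μ+ε) n
    · simpa [Set.indicator_of_mem hω] using h
    · simp [Set.indicator_of_notMem hω, Real.exp_nonneg]
  -- per-n inequality
  have key : ∀ n ∈ Finset.Ico N M, (P (Dset X f₀ (μ+ε) n)).toReal ≤
      Real.exp (-(lam*ε*N)) * ∫ ω, (Dset X f₀ (μ+ε) n).indicator 1 ω *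
        Real.exp (lam * (Ssum X M ω - M*μ)) ∂P := by
    intro n hn
    rw [Finset.mem_Ico] at hn
    have hnM : n ≤ M := hn.2.le
    have hcast : ((M - n : ℕ) : ℝ) = (M:ℝ) - n := by
      rw [Nat.cast_sub hnM]
    set c : ℝ := ((M:ℝ) - n) * μ with hc
    have hc0 : 0 ≤ c := by
      have : (n:ℝ) ≤ M := Nat.cast_le.2 hnM
      apply mul_nonneg (by linarith) hμ0
    have hcM : c ≤ M := by
      have h1 : (0:ℝ) ≤ n := Nat.cast_nonneg n
      have : (n:ℝ) ≤ M := Nat.cast_le.2 hnM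
      nlinarith
    have hZmeas : Measurable (fun ω => ∑ i ∈ Finset.Ioc n M, X i ω) :=
      Finset.measurable_sum _ fun i _ => hmeas i
    have hZbd : ∀ᵐ ω ∂P, 0 ≤ (∑ i ∈ Finset.Ioc n M, X i ω) ∧
        (∑ i ∈ Finset.Ioc n M, X i ω) ≤ (M:ℝ) - n := by
      filter_upwards [hbM] with ω h
      have hmem : ∀ i ∈ Finset.Ioc n M, X i ω ∈ Set.Icc (0:ℝ) 1 := fun i hi =>
        h i (by simp only [Finset.mem_Ioc] at hi; simp only [Finset.mem_Icc]; omega)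
      constructor
      · exact Finset.sum_nonneg fun i hi => (hmem i hi).1
      · calc ∑ i ∈ Finset.Ioc n M, X i ω ≤ ∑ _i ∈ Finset.Ioc n M, (1:ℝ) :=
              Finset.sum_le_sum fun i hi => (hmem i hi).2
          _ = (M:ℝ) - n := by rw [Finset.sum_const, Nat.card_Ioc]; simp [hcast]
    have hgint : Integrable (fun ω => Real.exp (lam * ((∑ i ∈ Finset.Ioc n M, X i ω) - c))) P := by
      refine int_bdd (C := Real.exp M) (((hZmeas.sub measurable_const).const_mul
        lam).exp).aestronglyMeasurable (hZbd.mono fun ω h => ?_)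
      rw [abs_of_nonneg (Real.exp_pos _).le]
      apply Real.exp_le_exp.2
      have hMn : (n:ℝ) ≤ M := Nat.cast_le.2 hnM
      have h1 : (0:ℝ) ≤ n := Nat.cast_nonneg n
      by_cases hd : 0 ≤ (∑ i ∈ Finset.Ioc n M, X i ω) - c
      · nlinarith [h.1, h.2]
      · nlinarith [h.1, h.2]
    have hZint : Integrable (fun ω => (∑ i ∈ Finset.Ioc n M, X i ω)) P := by
      refine int_bdd (C := (M:ℝ)) hZmeas.aestronglyMeasurable (hZbd.mono fun ω h => ?_)
      rw [abs_of_nonneg h.1]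
      have h1 : (0:ℝ) ≤ n := Nat.cast_nonneg n
      linarith [h.2]
    have hEZ : ∫ ω, (∑ i ∈ Finset.Ioc n M, X i ω) ∂P = c := by
      rw [integral_finset_sum _ (fun i _ => int_bdd (C := 1) (hmeas i).aestronglyMeasurable
        ((hb i).mono fun ω h => abs_le.2 ⟨by linarith [h.1], h.2⟩))]
      simp only [hμi]
      rw [Finset.sum_const, Nat.card_Ioc, hc, nsmul_eq_mul, hcast]
    have hg1 : (1:ℝ) ≤ ∫ ω, Real.exp (lam * ((∑ i ∈ Finset.Ioc n M, X i ω) - c)) ∂P := by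
      have hsubint : Integrable (fun ω => (∑ i ∈ Finset.Ioc n M, X i ω) - c) P :=
        hZint.sub (integrable_const c)
      have hlin2 : Integrable (fun ω => lam * ((∑ i ∈ Finset.Ioc n M, X i ω) - c)) P :=
        hsubint.const_mul lam
      have hlin : Integrable (fun ω => 1 + lam * ((∑ i ∈ Finset.Ioc n M, X i ω) - c)) P :=
        (integrable_const 1).add hlin2
      have hmono : ∫ ω, (1 + lam * ((∑ i ∈ Finset.Ioc n M, X i ω) - c)) ∂P ≤
          ∫ ω, Real.exp (lam * ((∑ i ∈ Finset.Ioc n M, X i ω) - c)) ∂P :=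
        integral_mono_ae hlin hgint (Filter.Eventually.of_forall fun ω =>
          Real.add_one_le_exp _ |>.trans_eq' (by ring))
      have hval : ∫ ω, (1 + lam * ((∑ i ∈ Finset.Ioc n M, X i ω) - c)) ∂P = 1 := by
        rw [integral_add (integrable_const 1) hlin2,
          integral_const_mul, integral_sub hZint (integrable_const c), hEZ]
        simp
      linarith [hmono, hval.ge]
    have hfactor := factor (P := P) hmeas hindep f₀ (μ+ε) c lam (n := n) (M := M)
    have hstep1 : (P (Dset X f₀ (μ+ε) n)).toReal ≤
        ∫ ω, (Dset X f₀ (μ+ε) n).indicator 1 ω *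
          Real.exp (lam * ((∑ i ∈ Finset.Ioc n M, X i ω) - c)) ∂P := by
      rw [hfactor]
      nlinarith [ENNReal.toReal_nonneg (a := P (Dset X f₀ (μ+ε) n)), hg1]
    refine hstep1.trans ?_
    rw [← integral_const_mul]
    have hDgint : Integrable (fun ω => (Dset X f₀ (μ+ε) n).indicator 1 ω *
        Real.exp (lam * ((∑ i ∈ Finset.Ioc n M, X i ω) - c))) P := by
      refine int_bdd (C := Real.exp M)
        (((measurable_const.indicator (Dset_meas hmeas f₀ (μ+ε) n)).mul
          ((hZmeas.sub measurable_const).const_mul lam).exp)).aestronglyMeasurable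
        (hZbd.mono fun ω h => ?_)
      rw [abs_mul]
      by_cases hω : ω ∈ Dset X f₀ (μ+ε) n
      · rw [Set.indicator_of_mem hω]
        simp only [Pi.one_apply, abs_one, one_mul]
        rw [abs_of_nonneg (Real.exp_pos _).le]
        apply Real.exp_le_exp.2
        have hMn : (n:ℝ) ≤ M := Nat.cast_le.2 hnM
        have h1 : (0:ℝ) ≤ n := Nat.cast_nonneg n
        by_cases hd : 0 ≤ (∑ i ∈ Finset.Ioc n M, X i ω) - c
        · have h3 := mul_le_of_le_one_left hd hl1
          linarith [h.2]
        · have h3 := mul_nonpos_of_nonneg_of_nonpos hl0 (le_of_not_ge hd)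
          linarith
      · rw [Set.indicator_of_notMem hω]
        simp [Real.exp_nonneg, (Real.exp_pos (M:ℝ)).le]
    have hRint : Integrable (fun ω => Real.exp (-(lam*ε*N)) *
        ((Dset X f₀ (μ+ε) n).indicator 1 ω * Real.exp (lam * (Ssum X M ω - M*μ)))) P :=
      (hDW_int n).const_mul _
    refine integral_mono_ae hDgint hRint (Filter.Eventually.of_forall fun ω => ?_)
    by_cases hω : ω ∈ Dset X f₀ (μ+ε) n
    · simp only [Set.indicator_of_mem hω, Pi.one_apply, one_mul]
      have hZω : (∑ i ∈ Finset.Ioc n M, X i ω) = Ssum X M ω - Ssum X n ω := by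
        rw [hsplit n hnM ω]; ring
      have hsn : (μ+ε)*n < Ssum X n ω := hω.1
      have hNn : (N:ℝ) ≤ n := Nat.cast_le.2 hn.1
      have h1 : ε*N + n*μ ≤ Ssum X n ω := by nlinarith
      rw [hZω, ← Real.exp_add]
      apply Real.exp_le_exp.2
      have h2 : 0 ≤ lam * (Ssum X n ω - (ε*N + n*μ)) :=
        mul_nonneg hl0 (by linarith)
      rw [hc]
      nlinarith [h2]
    · simp only [Set.indicator_of_notMem hω, zero_mul, mul_zero]
      positivity
  have hsum2 : ∑ n ∈ Finset.Ico N M, (∫ ω, (Dset X f₀ (μ+ε) n).indicator 1 ω *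
      Real.exp (lam * (Ssum X M ω - M*μ)) ∂P) ≤
      ∫ ω, Real.exp (lam * (Ssum X M ω - M*μ)) ∂P := by
    rw [← integral_finset_sum _ (fun n _ => hDW_int n)]
    refine integral_mono_ae (integrable_finset_sum _ fun n _ => hDW_int n) hWint
      (Filter.Eventually.of_forall fun ω => ?_)
    simp only
    by_cases hex : ∃ n ∈ Finset.Ico N M, ω ∈ Dset X f₀ (μ+ε) n
    · obtain ⟨n₀, hn₀s, hn₀⟩ := hex
      have huniq : ∀ b ∈ Finset.Ico N M, b ≠ n₀ →
          (Dset X f₀ (μ+ε) b).indicator 1 ω * Real.exp (lam * (Ssum X M ω - M*μ)) = 0 := by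
        intro b hb hbne
        have hnot : ω ∉ Dset X f₀ (μ+ε) b := by
          intro hmem
          rw [Finset.mem_Ico] at hb
          rw [Finset.mem_Ico] at hn₀s
          rcases lt_or_gt_of_ne hbne with hlt | hgt
          · exact absurd hmem.1 (not_lt.2 (hn₀.2 b (le_trans hfN hb.1) hlt))
          · exact absurd hn₀.1 (not_lt.2 (hmem.2 n₀ (le_trans hfN hn₀s.1) hgt))
        simp [Set.indicator_of_notMem hnot]
      rw [Finset.sum_eq_single_of_mem n₀ hn₀s huniq, Set.indicator_of_mem hn₀]
      simp
    · push_neg at hex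
      have hall : ∀ b ∈ Finset.Ico N M,
          (Dset X f₀ (μ+ε) b).indicator 1 ω * Real.exp (lam * (Ssum X M ω - M*μ)) = 0 :=
        fun b hb => by simp [Set.indicator_of_notMem (hex b hb)]
      rw [Finset.sum_eq_zero hall]
      positivity
  calc ∑ n ∈ Finset.Ico N M, (P (Dset X f₀ (μ+ε) n)).toReal
      ≤ ∑ n ∈ Finset.Ico N M, Real.exp (-(lam*ε*N)) * (∫ ω, (Dset X f₀ (μ+ε) n).indicator 1 ω *
          Real.exp (lam * (Ssum X M ω - M*μ)) ∂P) := Finset.sum_le_sum key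
    _ = Real.exp (-(lam*ε*N)) * ∑ n ∈ Finset.Ico N M, (∫ ω, (Dset X f₀ (μ+ε) n).indicator 1 ω *
          Real.exp (lam * (Ssum X M ω - M*μ)) ∂P) := (Finset.mul_sum _ _ _).symm
    _ ≤ Real.exp (-(lam*ε*N)) * ∫ ω, Real.exp (lam * (Ssum X M ω - M*μ)) ∂P :=
        mul_le_mul_of_nonneg_left hsum2 (Real.exp_pos _).le
    _ ≤ Real.exp (-(lam*ε*N)) * Real.exp ((3/16)*lam^2*M) :=
        mul_le_mul_of_nonneg_left hWle (Real.exp_pos _).le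
    _ = Real.exp (((3/8)*lam^2 - lam*ε) * N) := by
        rw [← Real.exp_add]
        congr 1
        rw [hM]
        push_cast
        ring

lemma dyadic_block {f₀ n : ℕ} (hf : 1 ≤ f₀) (hn : f₀ ≤ n) :
    ∃ r : ℕ, f₀ * 2^r ≤ n ∧ n < f₀ * 2^(r+1) := by
  set m := n / f₀ with hm
  have hm1 : 1 ≤ m := (Nat.one_le_div_iff hf).2 hn
  refine ⟨Nat.log 2 m, ?_, ?_⟩
  · calc f₀ * 2^(Nat.log 2 m) ≤ f₀ * m :=
        Nat.mul_le_mul_left f₀ (Nat.pow_log_le_self 2 (by omega))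
    _ ≤ n := by rw [hm, mul_comm]; exact Nat.div_mul_le_self n f₀
  · have h1 : m < 2^(Nat.log 2 m + 1) := Nat.lt_pow_succ_log_self (by norm_num) m
    have h2 : n < (m+1) * f₀ := (Nat.div_lt_iff_lt_mul hf).1 (by omega)
    calc n < (m+1) * f₀ := h2
    _ ≤ 2^(Nat.log 2 m + 1) * f₀ := Nat.mul_le_mul_right f₀ (by omega)
    _ = f₀ * 2^(Nat.log 2 m + 1) := mul_comm _ _

theorem stmt_19 :
    ∃ C c : ℝ, 0 < C ∧ 0 < c ∧
      ∀ (Ω : Type) (m : MeasurableSpace Ω) (P : Measure Ω),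
        IsProbabilityMeasure P →
      ∀ (Δ η μ : ℝ), 0 < Δ → Δ < 1 → 2 < η →
      ∀ (X : ℕ → Ω → ℝ), (∀ i, Measurable (X i)) →
        iIndepFun X P →
        (∀ i, IdentDistrib (X i) (X 1) P P) →
        (∀ i, ∀ᵐ ω ∂P, X i ω ∈ Set.Icc (0:ℝ) 1) →
        (∀ i, ∫ ω, X i ω ∂P = μ) →
        P {ω | ∃ n : ℕ, ⌈64 * η / Δ ^ 2⌉₊ ≤ n ∧
            μ + Δ / 8 < (∑ i ∈ Finset.Icc 1 n, X i ω) / n} ≤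
          ENNReal.ofReal (C * Real.exp (-c * η)) := by
  refine ⟨2, 5/8, by norm_num, by norm_num, ?_⟩
  intro Ω m P hP Δ η μ hΔ0 hΔ1 hη X hmeas hindep _hid hb hμi
  classical
  set ε : ℝ := Δ/8 with hε
  have hε0 : 0 < ε := by rw [hε]; linarith
  set f₀ : ℕ := ⌈64 * η / Δ ^ 2⌉₊ with hf₀
  have hf₀R : 64 * η / Δ ^ 2 ≤ (f₀ : ℝ) := Nat.le_ceil _
  have hf₀pos : 1 ≤ f₀ := by
    rw [hf₀]
    refine Nat.one_le_iff_ne_zero.2 (Nat.ceil_pos.2 ?_).ne'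
    positivity
  -- inclusion into dyadic union of Dsets
  have hincl : {ω | ∃ n : ℕ, f₀ ≤ n ∧ μ + Δ / 8 < (∑ i ∈ Finset.Icc 1 n, X i ω) / n} ⊆
      ⋃ r : ℕ, ⋃ n ∈ Finset.Ico (f₀ * 2^r) (f₀ * 2^(r+1)), Dset X f₀ (μ+ε) n := by
    intro ω hω
    obtain ⟨n, hn, hlt⟩ := hω
    have hQ : ∃ k : ℕ, f₀ ≤ k ∧ (μ+ε) * k < Ssum X k ω := by
      refine ⟨n, hn, ?_⟩
      have hn0 : (0:ℝ) < n := by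
        have : 1 ≤ n := le_trans hf₀pos hn
        exact_mod_cast this
      rw [← hε] at hlt
      exact (lt_div_iff₀ hn0).1 hlt
    set n₀ := Nat.find hQ with hn₀
    obtain ⟨hn₀f, hn₀lt⟩ := Nat.find_spec hQ
    have hmem : ω ∈ Dset X f₀ (μ+ε) n₀ := by
      refine ⟨hn₀lt, fun k hk1 hk2 => ?_⟩
      by_contra hcon
      push_neg at hcon
      exact absurd (⟨hk1, hcon⟩ : f₀ ≤ k ∧ (μ+ε) * k < Ssum X k ω)
        (Nat.find_min hQ hk2)
    obtain ⟨r, hr1, hr2⟩ := dyadic_block hf₀pos hn₀f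
    exact Set.mem_iUnion.2 ⟨r, Set.mem_iUnion₂.2 ⟨n₀, Finset.mem_Ico.2 ⟨hr1, hr2⟩, hmem⟩⟩
  set q : ℝ := Real.exp (-(5/8) * η) with hq
  have hη0 : (0:ℝ) < η := by linarith
  have hq0 : 0 ≤ q := (Real.exp_pos _).le
  have hqhalf : q ≤ 1/2 := by
    have h1 : q ≤ Real.exp (-(5/4)) := Real.exp_le_exp.2 (by nlinarith)
    have h2 : Real.exp (-(5/4)) ≤ 1/2 := by
      rw [Real.exp_neg]
      have h3 : (2:ℝ) ≤ Real.exp (5/4) := by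
        have := Real.add_one_le_exp (5/4 : ℝ)
        linarith
      calc (Real.exp (5/4))⁻¹ ≤ (2:ℝ)⁻¹ := inv_anti₀ (by norm_num) h3
      _ = 1/2 := by norm_num
    linarith
  have hqlt : q < 1 := by linarith
  have hblockr : ∀ r : ℕ,
      P (⋃ n ∈ Finset.Ico (f₀ * 2^r) (f₀ * 2^(r+1)), Dset X f₀ (μ+ε) n) ≤
      ENNReal.ofReal (q^(r+1)) := by
    intro r
    refine le_trans (measure_biUnion_finset_le _ _) ?_
    have hrw : ∀ n ∈ Finset.Ico (f₀ * 2^r) (f₀ * 2^(r+1)),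
        P (Dset X f₀ (μ+ε) n) = ENNReal.ofReal ((P (Dset X f₀ (μ+ε) n)).toReal) :=
      fun n _ => (ENNReal.ofReal_toReal (measure_ne_top P _)).symm
    rw [Finset.sum_congr rfl hrw,
      ← ENNReal.ofReal_sum_of_nonneg (fun n _ => ENNReal.toReal_nonneg)]
    apply ENNReal.ofReal_le_ofReal
    have hIco : f₀ * 2^(r+1) = 2 * (f₀ * 2^r) := by ring
    have hfN : f₀ ≤ f₀ * 2^r := Nat.le_mul_of_pos_right f₀ (Nat.pow_pos (by norm_num))
    have hbl := block (P := P) hmeas hindep hb hμi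
      (lam := ε) (ε := ε) hε0.le (by rw [hε]; linarith) hε0.le hfN
    rw [hIco]
    refine hbl.trans ?_
    have hexp : Real.exp (((3/8)*ε^2 - ε*ε) * (f₀ * 2^r : ℕ))
        ≤ q^(r+1) := by
      rw [hq, ← Real.exp_nat_mul]
      apply Real.exp_le_exp.2
      have h2r : ((r:ℝ)+1) ≤ 2^r := by
        have := Nat.lt_two_pow_self (n := r)
        exact_mod_cast Nat.succ_le_of_lt this
      have hcast : ((f₀ * 2^r : ℕ) : ℝ) = (f₀:ℝ) * 2^r := by push_cast; ring
      rw [hcast]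
      have hfη : η ≤ (f₀:ℝ) * Δ^2 / 64 := by
        rw [div_le_iff₀ (by positivity)] at hf₀R
        nlinarith
      have hεval : ε^2 = Δ^2/64 := by rw [hε]; ring
      have hkey : η * ((r:ℝ)+1) ≤ ε^2 * ((f₀:ℝ) * 2^r) := by
        have hp : (0:ℝ) < 2^r := by positivity
        calc η * ((r:ℝ)+1) ≤ η * 2^r := by nlinarith
        _ ≤ ((f₀:ℝ) * Δ^2 / 64) * 2^r := by nlinarith
        _ = ε^2 * ((f₀:ℝ) * 2^r) := by rw [hεval]; ring
      push_cast
      nlinarith [hkey]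
    exact hexp
  refine le_trans (measure_mono hincl) ?_
  refine le_trans (measure_iUnion_le _) ?_
  refine le_trans (ENNReal.tsum_le_tsum hblockr) ?_
  have hsumm : Summable (fun r : ℕ => q^(r+1)) := by
    have h1 : (fun r : ℕ => q^(r+1)) = fun r : ℕ => q * q^r := by
      funext r; rw [pow_succ]; ring
    rw [h1]
    exact (summable_geometric_of_lt_one hq0 hqlt).mul_left q
  rw [← ENNReal.ofReal_tsum_of_nonneg (fun r => pow_nonneg hq0 _) hsumm]
  apply ENNReal.ofReal_le_ofReal
  have htsum : ∑' r : ℕ, q^(r+1) = q * (1-q)⁻¹ := by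
    have h1 : (fun r : ℕ => q^(r+1)) = fun r : ℕ => q * q^r := by
      funext r; rw [pow_succ]; ring
    rw [h1, tsum_mul_left, tsum_geometric_of_lt_one hq0 hqlt]
  rw [htsum]
  have hinv : (1-q)⁻¹ ≤ 2 := by
    have h12 : (1:ℝ)/2 ≤ 1 - q := by linarith
    calc (1-q)⁻¹ ≤ ((1:ℝ)/2)⁻¹ := by
          apply inv_anti₀ (by norm_num) h12
    _ = 2 := by norm_num
  calc q * (1-q)⁻¹ ≤ q * 2 := by nlinarith
  _ = 2 * Real.exp (-(5/8) * η) := by rw [hq]; ring
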